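/- Assume α_(c) < α_0 < |α_τ|, where |α_τ| := min_{0<μ<N} |α_μ| and α_(c) := (Σ_{μ=1}^{N−1} |α_μ|^{−1})^{−1}, and define f(Ψ) = Σ_{μ=1}^{N−1} arcsin((α_0/|α_μ|) sin Ψ) for Ψ ∈ [0, π]. Then the equation f(Ψ) = Ψ has exactly one solution Ψ in the open interval (0, π). -/

import Mathlib

open Real Finset

private lemma abs_c_sin_lt_one {c x : ℝ} (hc : |c| < 1) : |c * Real.sin x| < 1 := by
  calc |c * Real.sin x| = |c| * |Real.sin x| := abs_mul _ _
    _ ≤ |c| * 1 := by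
        exact mul_le_mul_of_nonneg_left (Real.abs_sin_le_one x) (abs_nonneg c)
    _ = |c| := mul_one _
    _ < 1 := hc

private lemma u_pos {c x : ℝ} (hc : |c| < 1) : 0 < 1 - (c * Real.sin x) ^ 2 := by
  have h := abs_c_sin_lt_one (x := x) hc
  nlinarith [abs_nonneg (c * Real.sin x), sq_abs (c * Real.sin x)]

/-- First derivative of `t ↦ arcsin (c sin t)`. -/
private lemma hasDerivAt_arcsinSin {c : ℝ} (hc : |c| < 1) (x : ℝ) :
    HasDerivAt (fun t => Real.arcsin (c * Real.sin t))
      (c * Real.cos x / Real.sqrt (1 - (c * Real.sin x) ^ 2)) x := by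
  have hb := abs_c_sin_lt_one (x := x) hc
  have h1 : c * Real.sin x ≠ -1 := by
    intro h; rw [h] at hb; norm_num at hb
  have h2 : c * Real.sin x ≠ 1 := by
    intro h; rw [h] at hb; norm_num at hb
  have hinner : HasDerivAt (fun t => c * Real.sin t) (c * Real.cos x) x :=
    (Real.hasDerivAt_sin x).const_mul c
  have := (Real.hasDerivAt_arcsin h1 h2).comp x hinner
  refine this.congr_deriv ?_
  ring

/-- Second derivative of `t ↦ arcsin (c sin t)` (as derivative of the first derivative). -/
private lemma hasDerivAt_deriv_arcsinSin {c : ℝ} (hc : |c| < 1) (x : ℝ) :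
    HasDerivAt (fun t => c * Real.cos t / Real.sqrt (1 - (c * Real.sin t) ^ 2))
      ((c * -Real.sin x * Real.sqrt (1 - (c * Real.sin x) ^ 2)
        - c * Real.cos x * (-(2 * (c * Real.sin x) * (c * Real.cos x))
            / (2 * Real.sqrt (1 - (c * Real.sin x) ^ 2))))
        / Real.sqrt (1 - (c * Real.sin x) ^ 2) ^ 2) x := by
  have hu : 0 < 1 - (c * Real.sin x) ^ 2 := u_pos hc
  have hsne : Real.sqrt (1 - (c * Real.sin x) ^ 2) ≠ 0 :=
    ne_of_gt (Real.sqrt_pos.2 hu)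
  have hn : HasDerivAt (fun t => c * Real.cos t) (c * -Real.sin x) x :=
    (Real.hasDerivAt_cos x).const_mul c
  have huD : HasDerivAt (fun t => 1 - (c * Real.sin t) ^ 2)
      (-(2 * (c * Real.sin x) * (c * Real.cos x))) x := by
    have h1 : HasDerivAt (fun t => (c * Real.sin t) ^ 2)
        (2 * (c * Real.sin x) * (c * Real.cos x)) x := by
      have := (((Real.hasDerivAt_sin x).const_mul c).pow 2)
      refine this.congr_deriv ?_
      norm_num
    have := h1.const_sub 1
    convert this using 1
  have hd : HasDerivAt (fun t => Real.sqrt (1 - (c * Real.sin t) ^ 2))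
      (-(2 * (c * Real.sin x) * (c * Real.cos x))
        / (2 * Real.sqrt (1 - (c * Real.sin x) ^ 2))) x :=
    huD.sqrt hu.ne'
  exact hn.div hd hsne

/-- The second derivative is negative when `0 < c < 1` and `sin x > 0`. -/
private lemma deriv2_neg {c x : ℝ} (hc0 : 0 < c) (hc1 : c < 1) (hsx : 0 < Real.sin x) :
    (c * -Real.sin x * Real.sqrt (1 - (c * Real.sin x) ^ 2)
        - c * Real.cos x * (-(2 * (c * Real.sin x) * (c * Real.cos x))
            / (2 * Real.sqrt (1 - (c * Real.sin x) ^ 2))))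
        / Real.sqrt (1 - (c * Real.sin x) ^ 2) ^ 2 < 0 := by
  have hcabs : |c| < 1 := by rw [abs_of_pos hc0]; exact hc1
  have hu : 0 < 1 - (c * Real.sin x) ^ 2 := u_pos hcabs
  have hs : 0 < Real.sqrt (1 - (c * Real.sin x) ^ 2) := Real.sqrt_pos.2 hu
  have hsq : Real.sqrt (1 - (c * Real.sin x) ^ 2) * Real.sqrt (1 - (c * Real.sin x) ^ 2)
      = 1 - (c * Real.sin x) ^ 2 := Real.mul_self_sqrt hu.le
  apply div_neg_of_neg_of_pos _ (by positivity)
  have key : c * -Real.sin x * Real.sqrt (1 - (c * Real.sin x) ^ 2)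
        - c * Real.cos x * (-(2 * (c * Real.sin x) * (c * Real.cos x))
            / (2 * Real.sqrt (1 - (c * Real.sin x) ^ 2)))
      = c * Real.sin x * (c ^ 2 - 1) / Real.sqrt (1 - (c * Real.sin x) ^ 2) := by
    have hpy : Real.cos x ^ 2 = 1 - Real.sin x ^ 2 := by
      have := Real.sin_sq_add_cos_sq x; linarith
    generalize Real.sqrt (1 - (c * Real.sin x) ^ 2) = r at hs hsq ⊢
    field_simp
    linear_combination (-1) * hsq + c ^ 2 * hpy
  rw [key]
  apply div_neg_of_neg_of_pos _ hs
  have h1 : c ^ 2 - 1 < 0 := by nlinarith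
  exact mul_neg_of_pos_of_neg (mul_pos hc0 hsx) h1

theorem fixed_point_unique (N : ℕ) (hN : 2 < N)
    (α : ℕ → ℝ) (hα0 : 0 < α 0) (hαμ : ∀ μ ∈ Finset.Ico 1 N, α μ < 0)
    (hreg : ∀ μ ∈ Finset.Ico 1 N, α 0 < |α μ|)
    (hcrit : (∑ μ ∈ Finset.Ico 1 N, |α μ|⁻¹)⁻¹ < α 0) :
    ∃! Ψ : ℝ, Ψ ∈ Set.Ioo (0 : ℝ) π ∧
      (∑ μ ∈ Finset.Ico 1 N, Real.arcsin ((α 0 / |α μ|) * Real.sin Ψ)) = Ψ := by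
  set s : Finset ℕ := Finset.Ico 1 N with hs_def
  have hsne : s.Nonempty := ⟨1, by simp [hs_def]; omega⟩
  set c : ℕ → ℝ := fun μ => α 0 / |α μ| with hc_def
  have hαabs : ∀ μ ∈ s, 0 < |α μ| := fun μ hμ => abs_pos.2 (hαμ μ hμ).ne
  have hc0 : ∀ μ ∈ s, 0 < c μ := fun μ hμ => div_pos hα0 (hαabs μ hμ)
  have hc1 : ∀ μ ∈ s, c μ < 1 := fun μ hμ =>
    (div_lt_one (hαabs μ hμ)).2 (hreg μ hμ)
  have hcabs : ∀ μ ∈ s, |c μ| < 1 := fun μ hμ => by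
    rw [abs_of_pos (hc0 μ hμ)]; exact hc1 μ hμ
  -- the function g Ψ = f Ψ - Ψ
  set g : ℝ → ℝ := fun Ψ => (∑ μ ∈ s, Real.arcsin (c μ * Real.sin Ψ)) - Ψ with hg_def
  -- first derivative
  set D1 : ℝ → ℝ := fun x =>
    (∑ μ ∈ s, c μ * Real.cos x / Real.sqrt (1 - (c μ * Real.sin x) ^ 2)) - 1 with hD1_def
  have hgD : ∀ x, HasDerivAt g (D1 x) x := fun x =>
    (HasDerivAt.fun_sum fun μ hμ => hasDerivAt_arcsinSin (hcabs μ hμ) x).sub (hasDerivAt_id x)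
  have hgderiv : deriv g = D1 := funext fun x => (hgD x).deriv
  have hgcont : Continuous g :=
    continuous_iff_continuousAt.2 fun x => (hgD x).differentiableAt.continuousAt
  -- strict concavity
  have hconc : StrictConcaveOn ℝ (Set.Icc 0 π) g := by
    apply strictConcaveOn_of_deriv2_neg (convex_Icc 0 π) hgcont.continuousOn
    intro x hx
    rw [interior_Icc] at hx
    have hsx : 0 < Real.sin x := Real.sin_pos_of_pos_of_lt_pi hx.1 hx.2
    have hD1D : HasDerivAt D1
        (∑ μ ∈ s, ((c μ * -Real.sin x * Real.sqrt (1 - (c μ * Real.sin x) ^ 2)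
          - c μ * Real.cos x * (-(2 * (c μ * Real.sin x) * (c μ * Real.cos x))
              / (2 * Real.sqrt (1 - (c μ * Real.sin x) ^ 2))))
          / Real.sqrt (1 - (c μ * Real.sin x) ^ 2) ^ 2)) x :=
      (HasDerivAt.fun_sum fun μ hμ => hasDerivAt_deriv_arcsinSin (hcabs μ hμ) x).sub_const 1
    have : deriv^[2] g x = deriv (deriv g) x := by
      simp [Function.iterate_succ, Function.iterate_one]
    rw [this, hgderiv, hD1D.deriv]
    apply Finset.sum_neg (fun μ hμ => deriv2_neg (hc0 μ hμ) (hc1 μ hμ) hsx) hsne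
  -- g 0 = 0 and g π = -π
  have hg0 : g 0 = 0 := by simp [hg_def]
  have hgpi : g π = -π := by simp [hg_def]
  -- sum of c's exceeds 1
  have hS : 1 < ∑ μ ∈ s, c μ := by
    have hT : 0 < ∑ μ ∈ s, |α μ|⁻¹ :=
      Finset.sum_pos (fun μ hμ => inv_pos.2 (hαabs μ hμ)) hsne
    have : (∑ μ ∈ s, |α μ|⁻¹)⁻¹ < α 0 := hcrit
    have h1 : 1 < α 0 * ∑ μ ∈ s, |α μ|⁻¹ := by
      calc (1:ℝ) = (∑ μ ∈ s, |α μ|⁻¹)⁻¹ * ∑ μ ∈ s, |α μ|⁻¹ := (inv_mul_cancel₀ hT.ne').symm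
        _ < α 0 * ∑ μ ∈ s, |α μ|⁻¹ := mul_lt_mul_of_pos_right this hT
    calc (1 : ℝ) < α 0 * ∑ μ ∈ s, |α μ|⁻¹ := h1
      _ = ∑ μ ∈ s, c μ := by
          rw [Finset.mul_sum]
          exact Finset.sum_congr rfl fun μ _ => (div_eq_mul_inv _ _).symm
  set S : ℝ := ∑ μ ∈ s, c μ with hS_def
  have hSpos : 0 < S := lt_trans one_pos hS
  -- choose small Ψ₀ with g Ψ₀ > 0
  set ε : ℝ := 1 - 1 / S with hε_def
  have hε0 : 0 < ε := by
    have : 1 / S < 1 := by rw [div_lt_one hSpos]; exact hS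
    rw [hε_def]; linarith
  have hε1 : ε < 1 := by
    have : 0 < 1 / S := by positivity
    rw [hε_def]; linarith
  set Ψ₀ : ℝ := min 1 ε with hΨ₀_def
  have hΨ₀0 : 0 < Ψ₀ := lt_min one_pos hε0
  have hΨ₀1 : Ψ₀ ≤ 1 := min_le_left _ _
  have hΨ₀ε : Ψ₀ ≤ ε := min_le_right _ _
  have hΨ₀pi : Ψ₀ < π := lt_of_le_of_lt hΨ₀1 (by linarith [Real.pi_gt_three])
  have hsin₀ : Ψ₀ - Ψ₀ ^ 3 / 4 < Real.sin Ψ₀ := by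
    have := Real.sin_gt_sub_cube hΨ₀0
    nlinarith [pow_pos hΨ₀0 3]
  have hsin₀pos : 0 < Real.sin Ψ₀ := Real.sin_pos_of_pos_of_lt_pi hΨ₀0 hΨ₀pi
  have hsin₀le : Real.sin Ψ₀ ≤ 1 := Real.sin_le_one _
  have hgΨ₀ : 0 < g Ψ₀ := by
    have hterm : ∀ μ ∈ s, c μ * Real.sin Ψ₀ ≤ Real.arcsin (c μ * Real.sin Ψ₀) := by
      intro μ hμ
      have hy0 : 0 ≤ c μ * Real.sin Ψ₀ := le_of_lt (mul_pos (hc0 μ hμ) hsin₀pos)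
      have hy1 : c μ * Real.sin Ψ₀ ≤ 1 := by
        have := hc1 μ hμ
        nlinarith
      have harc0 : 0 ≤ Real.arcsin (c μ * Real.sin Ψ₀) := Real.arcsin_nonneg.2 hy0
      have := Real.sin_le harc0
      rwa [Real.sin_arcsin (by linarith) hy1] at this
    have hsum : S * Real.sin Ψ₀ ≤ ∑ μ ∈ s, Real.arcsin (c μ * Real.sin Ψ₀) := by
      rw [hS_def, Finset.sum_mul]
      exact Finset.sum_le_sum hterm
    have hkey : Ψ₀ < S * Real.sin Ψ₀ := by
      have h1 : S * (Ψ₀ - Ψ₀ ^ 3 / 4) < S * Real.sin Ψ₀ :=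
        (mul_lt_mul_iff_right₀ hSpos).2 hsin₀
      have h2 : Ψ₀ ≤ S * (Ψ₀ - Ψ₀ ^ 3 / 4) := by
        have hSε : S * (1 - ε) = 1 := by
          rw [hε_def]; field_simp; ring
        have hΨsq : Ψ₀ ^ 2 ≤ Ψ₀ := by nlinarith
        nlinarith [mul_pos hSpos hΨ₀0]
      linarith
    have : Ψ₀ < ∑ μ ∈ s, Real.arcsin (c μ * Real.sin Ψ₀) := lt_of_lt_of_le hkey hsum
    simp only [hg_def]; linarith
  -- existence via IVT
  have hexists : ∃ Ψ ∈ Set.Ioo Ψ₀ π, g Ψ = 0 := by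
    have h0mem : (0 : ℝ) ∈ Set.Ioo (g π) (g Ψ₀) := by
      rw [hgpi]; exact ⟨by linarith [Real.pi_pos], hgΨ₀⟩
    have := intermediate_value_Ioo' (le_of_lt hΨ₀pi) hgcont.continuousOn h0mem
    obtain ⟨Ψ, hΨmem, hΨ⟩ := this
    exact ⟨Ψ, hΨmem, hΨ⟩
  obtain ⟨Ψ, hΨmem, hΨ0⟩ := hexists
  have hΨIoo : Ψ ∈ Set.Ioo (0 : ℝ) π := ⟨lt_trans hΨ₀0 hΨmem.1, hΨmem.2⟩
  -- uniqueness claim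
  have huniq : ∀ a ∈ Set.Ioo (0 : ℝ) π, ∀ b ∈ Set.Ioo (0 : ℝ) π,
      g a = 0 → g b = 0 → a = b := by
    have key : ∀ a b : ℝ, a ∈ Set.Ioo (0 : ℝ) π → b ∈ Set.Ioo (0 : ℝ) π →
        g a = 0 → g b = 0 → a < b → False := by
      intro a b ha hb hga hgb hab
      have hb0 : (0 : ℝ) ≠ b := ne_of_lt hb.1
      have ht1 : 0 < 1 - a / b := by
        have : a / b < 1 := (div_lt_one hb.1).2 hab
        linarith
      have ht2 : 0 < a / b := div_pos ha.1 hb.1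
      have := hconc.2 (Set.mem_Icc.2 ⟨le_refl 0, Real.pi_pos.le⟩)
        (Set.mem_Icc.2 ⟨hb.1.le, hb.2.le⟩) hb0 ht1 ht2 (by ring)
      simp only [smul_eq_mul, mul_zero, zero_add, hg0, hgb] at this
      have hab' : a / b * b = a := div_mul_cancel₀ a hb.1.ne'
      rw [hab'] at this
      rw [hga] at this
      linarith
    intro a ha b hb hga hgb
    rcases lt_trichotomy a b with h | h | h
    · exact absurd (key a b ha hb hga hgb h) (fun h => h)
    · exact h
    · exact absurd (key b a hb ha hgb hga h) (fun h => h)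
  -- assemble
  refine ⟨Ψ, ⟨hΨIoo, ?_⟩, ?_⟩
  · have : g Ψ = 0 := hΨ0
    simpa [hg_def, sub_eq_zero] using this
  · rintro y ⟨hy, hyeq⟩
    have hgy : g y = 0 := by simp [hg_def, hc_def, hyeq]
    exact huniq y hy Ψ hΨIoo hgy hΨ0
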